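/- arXiv:math/0411105 — 2 statements merged into one kernel-verified Lean document; each statement's English description precedes it below -/
import Mathlib

section
/- Let (B,i,j) be a representation datum for the quiver of type A_{n-1} which is stable. If g = (g_k)_{k∈I}, with each g_k an invertible linear automorphism of V_k, satisfies g_l ∘ B_{k,l} ∘ g_k^{-1} = B_{k,l} for every arrow (k,l), g_k ∘ i_k = i_k for all k, and j_k ∘ g_k^{-1} = j_k for all k, then g_k = id_{V_k} for all k. (Equivalently: the stabilizer in G_v = ∏_{k∈I} GL(V_k) of any stable point is trivial.) -/
/-- The stabilizer in `G_v = ∏_{k ∈ I} GL(V_k)` of any stable point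
`(B, i, j)` of the representation space of the type `A_{n-1}` quiver is trivial.
Vertices are `1, …, n-1`; `Bdown k : V k → V (k-1)` is the map along the arrow
`h_{k,k-1}` and `Bup k : V (k-1) → V k` is the map along the arrow `h_{k-1,k}`
(for `2 ≤ k ≤ n-1`). -/
theorem stabilizer_of_stable_point_trivial
    (n : ℕ) (hn : 2 ≤ n)
    (V : ℕ → Type*) [∀ k, AddCommGroup (V k)] [∀ k, Module ℂ (V k)]
    (W : ℕ → Type*) [∀ k, AddCommGroup (W k)] [∀ k, Module ℂ (W k)]
    (Bdown : ∀ k, V k →ₗ[ℂ] V (k - 1))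
    (Bup : ∀ k, V (k - 1) →ₗ[ℂ] V k)
    (i : ∀ k, W k →ₗ[ℂ] V k) (j : ∀ k, V k →ₗ[ℂ] W k)
    -- stability of the datum (B, i, j):
    (hstable : ∀ S : ∀ k, Submodule ℂ (V k),
      (∀ k, 2 ≤ k → k ≤ n - 1 → ∀ v ∈ S k, Bdown k v ∈ S (k - 1)) →
      (∀ k, 2 ≤ k → k ≤ n - 1 → ∀ v ∈ S (k - 1), Bup k v ∈ S k) →
      (∀ k, 1 ≤ k → k ≤ n - 1 → LinearMap.range (i k) ≤ S k) →
      ∀ k, 1 ≤ k → k ≤ n - 1 → S k = ⊤)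
    -- an element g of G_v fixing the point (B, i, j):
    (g : ∀ k, V k ≃ₗ[ℂ] V k)
    (hgBdown : ∀ k, 2 ≤ k → k ≤ n - 1 → ∀ v, g (k - 1) (Bdown k ((g k).symm v)) = Bdown k v)
    (hgBup : ∀ k, 2 ≤ k → k ≤ n - 1 → ∀ v, g k (Bup k ((g (k - 1)).symm v)) = Bup k v)
    (hgi : ∀ k, 1 ≤ k → k ≤ n - 1 → ∀ w, g k (i k w) = i k w)
    (hgj : ∀ k, 1 ≤ k → k ≤ n - 1 → ∀ v, j k ((g k).symm v) = j k v) :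
    ∀ k, 1 ≤ k → k ≤ n - 1 → ∀ v, g k v = v := by
  set S : ∀ k, Submodule ℂ (V k) := fun k =>
    LinearMap.eqLocus (g k).toLinearMap (LinearMap.id) with hS
  have hfix : ∀ k v, v ∈ S k ↔ g k v = v := fun k v => Iff.rfl
  have hsymm : ∀ k v, g k v = v → (g k).symm v = v := by
    intro k v h
    apply (g k).injective
    rw [LinearEquiv.apply_symm_apply, h]
  have := hstable S
    (fun k h2 hk v hv => by
      have hv' : g k v = v := hv
      show g (k-1) (Bdown k v) = Bdown k v
      have := hgBdown k h2 hk v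
      rwa [hsymm k v hv'] at this)
    (fun k h2 hk v hv => by
      have hv' : g (k-1) v = v := hv
      show g k (Bup k v) = Bup k v
      have := hgBup k h2 hk v
      rwa [hsymm (k-1) v hv'] at this)
    (fun k h1 hk => by
      rintro v ⟨w, rfl⟩
      exact hgi k h1 hk w)
  intro k h1 hk v
  have : v ∈ S k := (this k h1 hk) ▸ Submodule.mem_top
  exact this
end

section
/- Set x = j ∘ i ∈ End(W) and, for 1 ≤ l ≤ n−1, F_l = ker( B_{l−1,l} ∘ ⋯ ∘ B_{1,2} ∘ i ) ⊆ W (so F_1 = ker i), with F_0 = 0. Then for every 2 ≤ k ≤ n−1: x^{−1}(F_{k−1}) = ker( B_{k,k−1} ∘ B_{k−1,k} ∘ B_{k−2,k−1} ∘ ⋯ ∘ B_{1,2} ∘ i ). -/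
noncomputable section

variable (V : ℕ → Type*) [∀ k, AddCommGroup (V k)] [∀ k, Module ℂ (V k)]

/-- The ascending composite `B_{l-1,l} ∘ ⋯ ∘ B_{1,2} : V 1 →ₗ V l` (the identity for
`l = 1`), where `Bup k : V (k-1) → V k` is the map `B_{k-1,k}`. -/
def asc (Bup : ∀ k, V (k - 1) →ₗ[ℂ] V k) : (l : ℕ) → (V 1 →ₗ[ℂ] V l)
  | 0 => 0
  | 1 => LinearMap.id
  | l + 2 => (Bup (l + 2)).comp (asc Bup (l + 1))

lemma asc_comp_ij
    (n : ℕ)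
    (W : Type*) [AddCommGroup W] [Module ℂ W]
    (Bdown : ∀ k, V k →ₗ[ℂ] V (k - 1)) (Bup : ∀ k, V (k - 1) →ₗ[ℂ] V k)
    (i : W →ₗ[ℂ] V 1) (j : V 1 →ₗ[ℂ] W)
    (hij : i.comp j = (Bdown 2).comp (Bup 2))
    (hrel : ∀ l, 2 ≤ l → l ≤ n - 2 →
      (Bup l).comp (Bdown l) = (Bdown (l + 1)).comp (Bup (l + 1))) :
    ∀ k, 2 ≤ k → k ≤ n - 1 →
      (asc V Bup (k - 1)).comp (i.comp j)
        = (Bdown k).comp ((Bup k).comp (asc V Bup (k - 1))) := by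
  intro k hk
  induction k, hk using Nat.le_induction with
  | base =>
    intro _
    show LinearMap.comp LinearMap.id (i.comp j) = _
    rw [LinearMap.id_comp, hij]
    rfl
  | succ k hk IH =>
    intro hkn
    obtain ⟨m, rfl⟩ : ∃ m, k = m + 2 := ⟨k - 2, by omega⟩
    have e1 : asc V Bup (m + 2) = (Bup (m + 2)).comp (asc V Bup (m + 1)) := rfl
    have IH2 : (asc V Bup (m + 1)).comp (i.comp j)
        = (Bdown (m + 2)).comp ((Bup (m + 2)).comp (asc V Bup (m + 1))) := IH (by omega)
    show (asc V Bup (m + 2)).comp (i.comp j)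
        = (Bdown (m + 3)).comp ((Bup (m + 3)).comp (asc V Bup (m + 2)))
    rw [e1, LinearMap.comp_assoc, IH2, ← LinearMap.comp_assoc,
      hrel (m + 2) (by omega) (by omega), LinearMap.comp_assoc]

/-- with `x = j ∘ i : W → W` and
`F_l = ker (B_{l-1,l} ∘ ⋯ ∘ B_{1,2} ∘ i)` for `1 ≤ l ≤ n-1`, one has, for `2 ≤ k ≤ n-1`,
`x⁻¹(F_{k-1}) = ker (B_{k,k-1} ∘ B_{k-1,k} ∘ B_{k-2,k-1} ∘ ⋯ ∘ B_{1,2} ∘ i)`. -/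
theorem preimage_flag_eq_ker
    (n : ℕ) (hn : 2 ≤ n)
    (W : Type*) [AddCommGroup W] [Module ℂ W]
    (Bdown : ∀ k, V k →ₗ[ℂ] V (k - 1)) (Bup : ∀ k, V (k - 1) →ₗ[ℂ] V k)
    (i : W →ₗ[ℂ] V 1) (j : V 1 →ₗ[ℂ] W)
    (hij : i.comp j = (Bdown 2).comp (Bup 2))
    (hrel : ∀ l, 2 ≤ l → l ≤ n - 2 →
      (Bup l).comp (Bdown l) = (Bdown (l + 1)).comp (Bup (l + 1))) :
    ∀ k, 2 ≤ k → k ≤ n - 1 →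
      Submodule.comap (j.comp i) (LinearMap.ker ((asc V Bup (k - 1)).comp i))
        = LinearMap.ker ((Bdown k).comp ((Bup k).comp ((asc V Bup (k - 1)).comp i))) := by
  intro k hk hkn
  have key := asc_comp_ij V n W Bdown Bup i j hij hrel k hk hkn
  ext w
  have h := LinearMap.congr_fun key (i w)
  simp only [LinearMap.comp_apply] at h
  simp only [Submodule.mem_comap, LinearMap.mem_ker, LinearMap.comp_apply, h]

end
end
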